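/- Let N ≥ 3, let c₁, …, c_{N−1} ≥ 0, X ≥ 0 and κ ≥ 0 satisfy: X² = (c₁² + κ/2) + (Y² + κ/2) for some Y ≥ 0 with Y² ≥ c₂² + ⋯ + c_{N−1}², and c₁² + κ/2 ≥ 0. Then for any ν ≥ 2, X^ν ≥ (4(c₁² + κ/2)·((N−2)·(∏_{i=2}^{N−1} c_i²)^{1/(N−2)} + κ/2))^{ν/4}. -/

import Mathlib

theorem stmt4 (N : ℕ) (hN : 3 ≤ N) (c1 : ℝ) (hc1 : 0 ≤ c1)
    (c : Fin (N - 2) → ℝ) (hc : ∀ i, 0 ≤ c i)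
    (X Y κ : ℝ) (hX : 0 ≤ X) (hY : 0 ≤ Y) (hκ : 0 ≤ κ)
    (hsum : X ^ 2 = (c1 ^ 2 + κ / 2) + (Y ^ 2 + κ / 2))
    (hYmono : ∑ i, (c i) ^ 2 ≤ Y ^ 2)
    (hpos : 0 ≤ c1 ^ 2 + κ / 2)
    (ν : ℝ) (hν : 2 ≤ ν) :
    (4 * (c1 ^ 2 + κ / 2) *
      ((N - 2) * (∏ i, (c i) ^ 2) ^ ((1 : ℝ) / (N - 2)) + κ / 2)) ^ (ν / 4)
      ≤ X ^ ν := by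
  have hcast : ((N : ℝ) - 2) = ((N - 2 : ℕ) : ℝ) := by
    push_cast [Nat.cast_sub (by omega : 2 ≤ N)]; ring
  have hnpos : (0 : ℝ) < ((N - 2 : ℕ) : ℝ) := by
    exact_mod_cast Nat.pos_of_ne_zero (by omega)
  have hP0 : 0 ≤ ∏ i, (c i) ^ 2 := Finset.prod_nonneg fun i _ => sq_nonneg _
  have hAMGM : ((N - 2 : ℕ) : ℝ) * (∏ i, (c i) ^ 2) ^ ((1 : ℝ) / ((N - 2 : ℕ) : ℝ))
      ≤ ∑ i, (c i) ^ 2 := by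
    have h := Real.geom_mean_le_arith_mean_weighted Finset.univ
      (fun _ : Fin (N - 2) => 1 / ((N - 2 : ℕ) : ℝ)) (fun i => (c i) ^ 2)
      (fun i _ => by positivity)
      (by simp [Finset.sum_const, Finset.card_univ]; field_simp)
      (fun i _ => sq_nonneg _)
    rw [Real.finset_prod_rpow _ _ (fun i _ => sq_nonneg _) _] at h
    calc ((N - 2 : ℕ) : ℝ) * (∏ i, (c i) ^ 2) ^ ((1:ℝ)/((N - 2 : ℕ) : ℝ))
        ≤ ((N - 2 : ℕ) : ℝ) * ∑ i, (1 / ((N - 2 : ℕ) : ℝ)) * (c i) ^ 2 :=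
          mul_le_mul_of_nonneg_left h (le_of_lt hnpos)
      _ = ∑ i, (c i) ^ 2 := by
          rw [Finset.mul_sum]
          refine Finset.sum_congr rfl fun i _ => ?_
          field_simp
  rw [hcast]
  have hinner : 0 ≤ ((N - 2 : ℕ) : ℝ) * (∏ i, (c i) ^ 2) ^ ((1:ℝ)/((N - 2 : ℕ) : ℝ)) + κ / 2 := by
    have : 0 ≤ (∏ i, (c i) ^ 2) ^ ((1:ℝ)/((N - 2 : ℕ) : ℝ)) := Real.rpow_nonneg hP0 _
    positivity
  have hL0 : 0 ≤ 4 * (c1 ^ 2 + κ / 2) *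
      (((N - 2 : ℕ) : ℝ) * (∏ i, (c i) ^ 2) ^ ((1:ℝ)/((N - 2 : ℕ) : ℝ)) + κ / 2) := by
    positivity
  have hLX4 : 4 * (c1 ^ 2 + κ / 2) *
      (((N - 2 : ℕ) : ℝ) * (∏ i, (c i) ^ 2) ^ ((1:ℝ)/((N - 2 : ℕ) : ℝ)) + κ / 2)
      ≤ X ^ (4 : ℕ) := by
    have h1 : ((N - 2 : ℕ) : ℝ) * (∏ i, (c i) ^ 2) ^ ((1:ℝ)/((N - 2 : ℕ) : ℝ)) + κ / 2
        ≤ Y ^ 2 + κ / 2 := by linarith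
    have h2 := mul_le_mul_of_nonneg_left h1 (by positivity : (0:ℝ) ≤ 4 * (c1 ^ 2 + κ / 2))
    have h3 : 4 * (c1 ^ 2 + κ / 2) * (Y ^ 2 + κ / 2)
        ≤ ((c1 ^ 2 + κ / 2) + (Y ^ 2 + κ / 2)) ^ 2 := by
      nlinarith [sq_nonneg ((c1 ^ 2 + κ / 2) - (Y ^ 2 + κ / 2))]
    have h4 : X ^ (4 : ℕ) = ((c1 ^ 2 + κ / 2) + (Y ^ 2 + κ / 2)) ^ 2 := by
      rw [← hsum]; ring
    linarith
  calc (4 * (c1 ^ 2 + κ / 2) *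
      (((N - 2 : ℕ) : ℝ) * (∏ i, (c i) ^ 2) ^ ((1:ℝ)/((N - 2 : ℕ) : ℝ)) + κ / 2)) ^ (ν / 4)
      ≤ (X ^ (4 : ℕ)) ^ (ν / 4) := Real.rpow_le_rpow hL0 hLX4 (by linarith)
    _ = X ^ ν := by
        rw [← Real.rpow_natCast X 4, ← Real.rpow_mul hX]
        congr 1; push_cast; ring
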